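/- Let T ∈ ℝ^{n_1×⋯×n_d} have a TR-representation with cores G_1,…,G_d and TR-ranks (r_0, r_1, …, r_d), r_d = r_0. Let A' ∈ ℝ^{(r_0 n_1)×r_1} be the matrix obtained by stacking the matrices G_1(1), G_1(2), …, G_1(n_1) vertically. If rank(A') = s < r_1, so that A' = U·V for some U ∈ ℝ^{(r_0 n_1)×s} and V ∈ ℝ^{s×r_1}, then T admits a TR-representation with TR-ranks (r_0, s, r_2, …, r_{d−1}, r_0): its first cores are obtained by reshaping U into matrices Ĝ_1(i_1) ∈ ℝ^{r_0×s}, its second cores are Ĝ_2(i_2) = V·G_2(i_2), and the remaining cores are G_3,…,G_d unchanged. In particular, if (r_0, r_1, …, r_d) is a minimal TR-rank of T realized by the cores G_k, then the stacked matrix A' has full column rank r_1. -/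

import Mathlib

/-- Cyclic successor on `Fin d`. -/
def finSucc {d : ℕ} (k : Fin d) : Fin d := ⟨(k.val + 1) % d, Nat.mod_lt _ k.pos⟩

/-- Value of the tensor-ring contraction of cores `G` at the multi-index `i`
(the trace of the product of the core matrices, in index form). -/
def trVal {d : ℕ} (n ρ : Fin d → ℕ)
    (G : ∀ k : Fin d, Fin (n k) → Matrix (Fin (ρ k)) (Fin (ρ (finSucc k))) ℝ)
    (i : ∀ k : Fin d, Fin (n k)) : ℝ :=
  ∑ α : ∀ k : Fin d, Fin (ρ k), ∏ k : Fin d, G k (i k) (α k) (α (finSucc k))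

/-- `(ρ 0, …, ρ (d-1), ρ 0)` is a TR-rank of `T`. -/
def IsTRRank {d : ℕ} (n ρ : Fin d → ℕ) (T : (∀ k : Fin d, Fin (n k)) → ℝ) : Prop :=
  ∃ G : ∀ k : Fin d, Fin (n k) → Matrix (Fin (ρ k)) (Fin (ρ (finSucc k))) ℝ,
    ∀ i, T i = trVal n ρ G i

/-- The `k`-th unfolding matrix of a tensor. -/
def unfold {d : ℕ} (n : Fin d → ℕ) (T : (∀ k : Fin d, Fin (n k)) → ℝ) (k : ℕ) :
    Matrix (∀ j : {j : Fin d // j.val < k}, Fin (n j.val))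
      (∀ j : {j : Fin d // ¬ j.val < k}, Fin (n j.val)) ℝ :=
  Matrix.of fun a b => T (fun j => if h : j.val < k then a ⟨j, h⟩ else b ⟨j, h⟩)

lemma finSucc_zero {d : ℕ} (hd : 2 ≤ d) :
    finSucc (⟨0, by omega⟩ : Fin d) = ⟨1, by omega⟩ := by
  ext
  show (0 + 1) % d = 1
  exact Nat.mod_eq_of_lt (by omega)

lemma finSucc_ne_one {d : ℕ} (hd : 2 ≤ d) (k : Fin d) (hk : k ≠ ⟨0, by omega⟩) :
    finSucc k ≠ ⟨1, by omega⟩ := by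
  intro h
  apply hk
  have hv : (k.val + 1) % d = 1 := congrArg Fin.val h
  have hkd := k.isLt
  ext
  show k.val = 0
  rcases Nat.lt_or_ge (k.val + 1) d with h' | h'
  · rw [Nat.mod_eq_of_lt h'] at hv; omega
  · have hkd1 : k.val + 1 = d := by omega
    rw [hkd1, Nat.mod_self] at hv
    omega

lemma exists_rank_factorization {m : Type*} [Fintype m] {r : ℕ} (A : Matrix m (Fin r) ℝ) :
    ∃ (U : Matrix m (Fin A.rank) ℝ) (V : Matrix (Fin A.rank) (Fin r) ℝ), A = U * V := by
  classical
  have hW : Module.finrank ℝ (LinearMap.range A.mulVecLin) = A.rank := rfl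
  let b : Module.Basis (Fin A.rank) ℝ (LinearMap.range A.mulVecLin) :=
    Module.finBasisOfFinrankEq ℝ _ hW
  have hmem : ∀ j, A.mulVec (Pi.single j 1) ∈ LinearMap.range A.mulVecLin :=
    fun j => ⟨Pi.single j 1, rfl⟩
  refine ⟨Matrix.of (fun x t => (b t : m → ℝ) x),
    Matrix.of (fun t j => b.repr ⟨A.mulVec (Pi.single j 1), hmem j⟩ t), ?_⟩
  ext x j
  have h1 := b.sum_repr ⟨A.mulVec (Pi.single j 1), hmem j⟩
  have h2 := congrArg (fun w : LinearMap.range A.mulVecLin => (w : m → ℝ) x) h1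
  simp only [AddSubmonoidClass.coe_finset_sum, SetLike.val_smul, Finset.sum_apply,
    Pi.smul_apply, smul_eq_mul] at h2
  have h3 : A.mulVec (Pi.single j 1) x = A x j := by
    simp [Matrix.mulVec_single]
  rw [Matrix.mul_apply]
  simp only [Matrix.of_apply]
  rw [← h3, ← h2]
  exact Finset.sum_congr rfl fun t _ => mul_comm _ _

lemma finSucc_one_ne_one {d : ℕ} (hd : 2 ≤ d) :
    finSucc (⟨1, by omega⟩ : Fin d) ≠ ⟨1, by omega⟩ := by
  intro h
  have hv : (1 + 1) % d = 1 := congrArg Fin.val h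
  rcases Nat.lt_or_ge 2 d with h' | h'
  · rw [Nat.mod_eq_of_lt h'] at hv; omega
  · have hd2 : d = 2 := by omega
    subst hd2
    norm_num at hv

lemma pi_apply_eq_cast {d : ℕ} {τ : Fin d → ℕ} (g : ∀ k, Fin (τ k)) {a b : Fin d}
    (h : a = b) : g a = Fin.cast (congrArg τ h.symm) (g b) := by subst h; rfl

lemma fin_zero_ne_one' {d : ℕ} (hd : 2 ≤ d) : (⟨0, by omega⟩ : Fin d) ≠ ⟨1, by omega⟩ := by
  simp [Fin.ext_iff]

lemma trVal_split {d : ℕ} (hd : 2 ≤ d) (n τ : Fin d → ℕ)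
    (M : ∀ k : Fin d, Fin (n k) → Matrix (Fin (τ k)) (Fin (τ (finSucc k))) ℝ)
    (i : ∀ k : Fin d, Fin (n k)) :
    trVal n τ M i
    = ∑ f : ∀ j : {j : Fin d // j ≠ ⟨1, by omega⟩}, Fin (τ j.1),
        (∑ x : Fin (τ ⟨1, by omega⟩),
          M ⟨0, by omega⟩ (i ⟨0, by omega⟩) (f ⟨⟨0, by omega⟩, fin_zero_ne_one' hd⟩)
            (Fin.cast (congrArg τ (finSucc_zero hd).symm) x)
          * M ⟨1, by omega⟩ (i ⟨1, by omega⟩) x (f ⟨finSucc ⟨1, by omega⟩, finSucc_one_ne_one hd⟩))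
        * ∏ k ∈ ((Finset.univ.erase (⟨0, by omega⟩ : Fin d)).erase ⟨1, by omega⟩).attach,
            M k.1 (i k.1) (f ⟨k.1, (Finset.mem_erase.mp k.2).1⟩)
              (f ⟨finSucc k.1,
                finSucc_ne_one hd k.1 (Finset.mem_erase.mp (Finset.mem_erase.mp k.2).2).1⟩) := by
  classical
  have h01 : (⟨0, by omega⟩ : Fin d) ≠ ⟨1, by omega⟩ := fin_zero_ne_one' hd
  rw [trVal,
    ← Equiv.sum_comp (Equiv.piSplitAt (⟨1, by omega⟩ : Fin d) (fun k => Fin (τ k))).symm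
      (fun α => ∏ k : Fin d, M k (i k) (α k) (α (finSucc k))),
    Fintype.sum_prod_type, Finset.sum_comm]
  refine Finset.sum_congr rfl fun f _ => ?_
  rw [Finset.sum_mul]
  refine Finset.sum_congr rfl fun x _ => ?_
  set g := (Equiv.piSplitAt (⟨1, by omega⟩ : Fin d) (fun k => Fin (τ k))).symm (x, f) with hgdef
  have hg1 : g ⟨1, by omega⟩ = x :=
    congrArg Prod.fst
      ((Equiv.piSplitAt (⟨1, by omega⟩ : Fin d) (fun k => Fin (τ k))).apply_symm_apply (x, f))
  have hgj : ∀ (j : Fin d) (hj : j ≠ ⟨1, by omega⟩), g j = f ⟨j, hj⟩ := fun j hj =>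
    congrFun
      (congrArg Prod.snd
        ((Equiv.piSplitAt (⟨1, by omega⟩ : Fin d) (fun k => Fin (τ k))).apply_symm_apply (x, f)))
      ⟨j, hj⟩
  rw [← Finset.mul_prod_erase Finset.univ _ (Finset.mem_univ (⟨0, by omega⟩ : Fin d)),
    ← Finset.mul_prod_erase _ _
      (Finset.mem_erase.mpr ⟨Ne.symm h01, Finset.mem_univ (⟨1, by omega⟩ : Fin d)⟩),
    ← mul_assoc]
  congr 1
  · congr 1
    · rw [pi_apply_eq_cast g (finSucc_zero hd), hg1, hgj _ h01]
    · rw [hg1, hgj _ (finSucc_one_ne_one hd)]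
  · rw [← Finset.prod_attach]
    exact Finset.prod_congr rfl fun k _ => by
      rw [hgj _ (Finset.mem_erase.mp k.2).1,
        hgj _ (finSucc_ne_one hd k.1 (Finset.mem_erase.mp (Finset.mem_erase.mp k.2).2).1)]

lemma tr_part1 {d : ℕ} (hd : 2 ≤ d) (n ρ : Fin d → ℕ)
    (G : ∀ k : Fin d, Fin (n k) → Matrix (Fin (ρ k)) (Fin (ρ (finSucc k))) ℝ)
    (T : (∀ k : Fin d, Fin (n k)) → ℝ)
    (hT : ∀ i, T i = trVal n ρ G i)
    (A' : Matrix (Fin (n ⟨0, by omega⟩) × Fin (ρ ⟨0, by omega⟩)) (Fin (ρ ⟨1, by omega⟩)) ℝ)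
    (hA' : ∀ i x y, A' (i, x) y =
      G ⟨0, by omega⟩ i x (Fin.cast (congrArg ρ (finSucc_zero hd).symm) y))
    (s : ℕ)
    (U : Matrix (Fin (n ⟨0, by omega⟩) × Fin (ρ ⟨0, by omega⟩)) (Fin s) ℝ)
    (V : Matrix (Fin s) (Fin (ρ ⟨1, by omega⟩)) ℝ)
    (hUV : A' = U * V)
    (σ : Fin d → ℕ) (hσ1 : σ ⟨1, hd⟩ = s)
    (hσ : ∀ k : Fin d, k ≠ ⟨1, hd⟩ → σ k = ρ k)
    (H : ∀ k : Fin d, Fin (n k) → Matrix (Fin (σ k)) (Fin (σ (finSucc k))) ℝ)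
    (hH0 : ∀ i x y, H ⟨0, Nat.lt_of_lt_of_le Nat.zero_lt_two hd⟩ i x y =
      U (i, Fin.cast (hσ ⟨0, Nat.lt_of_lt_of_le Nat.zero_lt_two hd⟩ (fin_zero_ne_one' hd)) x)
        (Fin.cast (by rw [finSucc_zero hd]; exact hσ1) y))
    (hH1 : ∀ i x y, H ⟨1, hd⟩ i x y =
      ∑ z : Fin (ρ ⟨1, hd⟩),
        V (Fin.cast hσ1 x) z *
          G ⟨1, hd⟩ i z
            (Fin.cast (hσ (finSucc ⟨1, hd⟩) (finSucc_ne_one hd _ (Ne.symm (fin_zero_ne_one' hd)))) y))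
    (hHr : ∀ (k : Fin d) (hk0 : k ≠ ⟨0, Nat.lt_of_lt_of_le Nat.zero_lt_two hd⟩) (hk1 : k ≠ ⟨1, hd⟩),
      ∀ i x y, H k i x y =
        G k i (Fin.cast (hσ k hk1) x)
          (Fin.cast (hσ (finSucc k) (finSucc_ne_one hd k hk0)) y)) :
    ∀ i, T i = trVal n σ H i := by
  intro i
  classical
  have h01 : (⟨0, by omega⟩ : Fin d) ≠ ⟨1, by omega⟩ := fin_zero_ne_one' hd
  have claim : ∀ (a : Fin (ρ ⟨0, by omega⟩)) (c : Fin (ρ (finSucc ⟨1, by omega⟩))),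
      (∑ x : Fin (σ ⟨1, by omega⟩),
        H ⟨0, by omega⟩ (i ⟨0, by omega⟩) (Fin.cast (hσ ⟨0, by omega⟩ h01).symm a)
          (Fin.cast (congrArg σ (finSucc_zero hd).symm) x)
        * H ⟨1, by omega⟩ (i ⟨1, by omega⟩) x
          (Fin.cast (hσ (finSucc ⟨1, by omega⟩) (finSucc_one_ne_one hd)).symm c))
      = ∑ z : Fin (ρ ⟨1, by omega⟩),
          G ⟨0, by omega⟩ (i ⟨0, by omega⟩) a (Fin.cast (congrArg ρ (finSucc_zero hd).symm) z)
          * G ⟨1, by omega⟩ (i ⟨1, by omega⟩) z c := by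
    intro a c
    calc (∑ x : Fin (σ ⟨1, by omega⟩),
        H ⟨0, by omega⟩ (i ⟨0, by omega⟩) (Fin.cast (hσ ⟨0, by omega⟩ h01).symm a)
          (Fin.cast (congrArg σ (finSucc_zero hd).symm) x)
        * H ⟨1, by omega⟩ (i ⟨1, by omega⟩) x
          (Fin.cast (hσ (finSucc ⟨1, by omega⟩) (finSucc_one_ne_one hd)).symm c))
        = ∑ x : Fin (σ ⟨1, by omega⟩), ∑ z : Fin (ρ ⟨1, by omega⟩),
            U (i ⟨0, by omega⟩, a) (Fin.cast hσ1 x) *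
              (V (Fin.cast hσ1 x) z * G ⟨1, by omega⟩ (i ⟨1, by omega⟩) z c) := by
          refine Finset.sum_congr rfl fun x _ => ?_
          rw [hH0, hH1, Finset.mul_sum]
          rfl
      _ = ∑ z : Fin (ρ ⟨1, by omega⟩),
            (∑ x : Fin (σ ⟨1, by omega⟩),
              U (i ⟨0, by omega⟩, a) (Fin.cast hσ1 x) * V (Fin.cast hσ1 x) z)
            * G ⟨1, by omega⟩ (i ⟨1, by omega⟩) z c := by
          rw [Finset.sum_comm]
          refine Finset.sum_congr rfl fun z _ => ?_
          rw [Finset.sum_mul]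
          exact Finset.sum_congr rfl fun x _ => (mul_assoc _ _ _).symm
      _ = ∑ z : Fin (ρ ⟨1, by omega⟩),
            G ⟨0, by omega⟩ (i ⟨0, by omega⟩) a (Fin.cast (congrArg ρ (finSucc_zero hd).symm) z)
            * G ⟨1, by omega⟩ (i ⟨1, by omega⟩) z c := by
          refine Finset.sum_congr rfl fun z _ => ?_
          congr 1
          rw [← hA' (i ⟨0, by omega⟩) a z, hUV, Matrix.mul_apply]
          exact Fintype.sum_equiv (finCongr hσ1) _ _ (fun x => rfl)
  rw [hT, trVal_split hd n ρ G i, trVal_split hd n σ H i]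
  refine Fintype.sum_equiv
    (Equiv.piCongrRight (fun j : {j : Fin d // j ≠ ⟨1, by omega⟩} =>
      finCongr (hσ j.1 j.2).symm)) _ _ (fun f' => ?_)
  refine congrArg₂ (· * ·) ?_ ?_
  · exact (claim (f' ⟨⟨0, by omega⟩, fin_zero_ne_one' hd⟩)
      (f' ⟨finSucc ⟨1, by omega⟩, finSucc_one_ne_one hd⟩)).symm
  · refine Finset.prod_congr rfl fun k _ => ?_
    rw [hHr k.1 (Finset.mem_erase.mp (Finset.mem_erase.mp k.2).2).1 (Finset.mem_erase.mp k.2).1]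
    rfl

def buildH {d : ℕ} (hd : 2 ≤ d) (n ρ : Fin d → ℕ)
    (G : ∀ k : Fin d, Fin (n k) → Matrix (Fin (ρ k)) (Fin (ρ (finSucc k))) ℝ)
    (s : ℕ)
    (U : Matrix (Fin (n ⟨0, by omega⟩) × Fin (ρ ⟨0, by omega⟩)) (Fin s) ℝ)
    (V : Matrix (Fin s) (Fin (ρ ⟨1, by omega⟩)) ℝ)
    (σ : Fin d → ℕ) (hσ1 : σ ⟨1, hd⟩ = s)
    (hσ : ∀ k : Fin d, k ≠ ⟨1, hd⟩ → σ k = ρ k) :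
    ∀ k : Fin d, Fin (n k) → Matrix (Fin (σ k)) (Fin (σ (finSucc k))) ℝ := fun k =>
  if h0 : k = ⟨0, Nat.lt_of_lt_of_le Nat.zero_lt_two hd⟩ then
    fun i x y =>
      U (Fin.cast (by rw [h0]) i,
         Fin.cast (by rw [h0]; exact hσ _ (fin_zero_ne_one' hd)) x)
        (Fin.cast (by rw [h0, finSucc_zero hd]; exact hσ1) y)
  else if h1 : k = ⟨1, hd⟩ then
    fun i x y =>
      ∑ z : Fin (ρ ⟨1, hd⟩),
        V (Fin.cast (by rw [h1]; exact hσ1) x) z *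
          G ⟨1, hd⟩ (Fin.cast (by rw [h1]) i) z
            (Fin.cast (by rw [h1]; exact hσ _ (finSucc_one_ne_one hd)) y)
  else fun i x y =>
    G k i (Fin.cast (hσ k h1) x) (Fin.cast (hσ (finSucc k) (finSucc_ne_one hd k h0)) y)

lemma buildH_zero {d : ℕ} (hd : 2 ≤ d) (n ρ : Fin d → ℕ)
    (G : ∀ k : Fin d, Fin (n k) → Matrix (Fin (ρ k)) (Fin (ρ (finSucc k))) ℝ)
    (s : ℕ)
    (U : Matrix (Fin (n ⟨0, by omega⟩) × Fin (ρ ⟨0, by omega⟩)) (Fin s) ℝ)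
    (V : Matrix (Fin s) (Fin (ρ ⟨1, by omega⟩)) ℝ)
    (σ : Fin d → ℕ) (hσ1 : σ ⟨1, hd⟩ = s)
    (hσ : ∀ k : Fin d, k ≠ ⟨1, hd⟩ → σ k = ρ k) :
    ∀ i x y, buildH hd n ρ G s U V σ hσ1 hσ ⟨0, Nat.lt_of_lt_of_le Nat.zero_lt_two hd⟩ i x y =
      U (i, Fin.cast (hσ ⟨0, Nat.lt_of_lt_of_le Nat.zero_lt_two hd⟩ (fin_zero_ne_one' hd)) x)
        (Fin.cast (by rw [finSucc_zero hd]; exact hσ1) y) := by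
  intro i x y
  have e := (show buildH hd n ρ G s U V σ hσ1 hσ ⟨0, Nat.lt_of_lt_of_le Nat.zero_lt_two hd⟩ = _
    from dif_pos rfl)
  rw [e]
  rfl

lemma buildH_one {d : ℕ} (hd : 2 ≤ d) (n ρ : Fin d → ℕ)
    (G : ∀ k : Fin d, Fin (n k) → Matrix (Fin (ρ k)) (Fin (ρ (finSucc k))) ℝ)
    (s : ℕ)
    (U : Matrix (Fin (n ⟨0, by omega⟩) × Fin (ρ ⟨0, by omega⟩)) (Fin s) ℝ)
    (V : Matrix (Fin s) (Fin (ρ ⟨1, by omega⟩)) ℝ)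
    (σ : Fin d → ℕ) (hσ1 : σ ⟨1, hd⟩ = s)
    (hσ : ∀ k : Fin d, k ≠ ⟨1, hd⟩ → σ k = ρ k) :
    ∀ i x y, buildH hd n ρ G s U V σ hσ1 hσ ⟨1, hd⟩ i x y =
      ∑ z : Fin (ρ ⟨1, hd⟩),
        V (Fin.cast hσ1 x) z *
          G ⟨1, hd⟩ i z
            (Fin.cast (hσ (finSucc ⟨1, hd⟩)
              (finSucc_ne_one hd _ (Ne.symm (fin_zero_ne_one' hd)))) y) := by
  intro i x y
  have e := (show buildH hd n ρ G s U V σ hσ1 hσ ⟨1, hd⟩ = _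
    from (dif_neg (Ne.symm (fin_zero_ne_one' hd))).trans (dif_pos rfl))
  rw [e]
  rfl

lemma buildH_rest {d : ℕ} (hd : 2 ≤ d) (n ρ : Fin d → ℕ)
    (G : ∀ k : Fin d, Fin (n k) → Matrix (Fin (ρ k)) (Fin (ρ (finSucc k))) ℝ)
    (s : ℕ)
    (U : Matrix (Fin (n ⟨0, by omega⟩) × Fin (ρ ⟨0, by omega⟩)) (Fin s) ℝ)
    (V : Matrix (Fin s) (Fin (ρ ⟨1, by omega⟩)) ℝ)
    (σ : Fin d → ℕ) (hσ1 : σ ⟨1, hd⟩ = s)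
    (hσ : ∀ k : Fin d, k ≠ ⟨1, hd⟩ → σ k = ρ k) :
    ∀ (k : Fin d) (hk0 : k ≠ ⟨0, Nat.lt_of_lt_of_le Nat.zero_lt_two hd⟩) (hk1 : k ≠ ⟨1, hd⟩),
      ∀ i x y, buildH hd n ρ G s U V σ hσ1 hσ k i x y =
        G k i (Fin.cast (hσ k hk1) x)
          (Fin.cast (hσ (finSucc k) (finSucc_ne_one hd k hk0)) y) := by
  intro k hk0 hk1 i x y
  have e := (show buildH hd n ρ G s U V σ hσ1 hσ k = _
    from (dif_neg hk0).trans (dif_neg hk1))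
  rw [e]

/-- If the vertical stacking `A'` of the first cores of a TR-representation of `T`
factors as `A' = U * V` through `Fin s`, then `T` admits a TR-representation with
TR-ranks `(ρ 0, s, ρ 2, …, ρ (d-1), ρ 0)`, whose first cores are obtained by reshaping
`U`, whose second cores are `V * G₂(i₂)`, and whose remaining cores are unchanged.
In particular, if the TR-rank `ρ` is minimal, then `A'` has full column rank `ρ 1`. -/
theorem tr_first_core_factorization {d : ℕ} (hd : 2 ≤ d) (n ρ : Fin d → ℕ)
    (G : ∀ k : Fin d, Fin (n k) → Matrix (Fin (ρ k)) (Fin (ρ (finSucc k))) ℝ)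
    (T : (∀ k : Fin d, Fin (n k)) → ℝ)
    (hT : ∀ i, T i = trVal n ρ G i)
    (A' : Matrix (Fin (n ⟨0, by omega⟩) × Fin (ρ ⟨0, by omega⟩)) (Fin (ρ ⟨1, by omega⟩)) ℝ)
    (hA' : ∀ i x y, A' (i, x) y =
      G ⟨0, by omega⟩ i x (Fin.cast (congrArg ρ (finSucc_zero hd).symm) y)) :
    (∀ (s : ℕ), A'.rank = s → s < ρ ⟨1, by omega⟩ →
      ∀ (U : Matrix (Fin (n ⟨0, by omega⟩) × Fin (ρ ⟨0, by omega⟩)) (Fin s) ℝ)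
        (V : Matrix (Fin s) (Fin (ρ ⟨1, by omega⟩)) ℝ),
        A' = U * V →
        ∀ (σ : Fin d → ℕ) (hσ1 : σ ⟨1, by omega⟩ = s)
          (hσ : ∀ k : Fin d, k ≠ ⟨1, by omega⟩ → σ k = ρ k)
          (H : ∀ k : Fin d, Fin (n k) → Matrix (Fin (σ k)) (Fin (σ (finSucc k))) ℝ),
          -- the first cores are obtained by reshaping `U`:
          (∀ i x y, H ⟨0, Nat.lt_of_lt_of_le Nat.zero_lt_two hd⟩ i x y =
            U (i, Fin.cast (hσ ⟨0, Nat.lt_of_lt_of_le Nat.zero_lt_two hd⟩ (by simp [Fin.ext_iff])) x)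
              (Fin.cast (by rw [finSucc_zero hd]; exact hσ1) y)) →
          -- the second cores are `V * G₂(i₂)`:
          (∀ i x y, H ⟨1, hd⟩ i x y =
            ∑ z : Fin (ρ ⟨1, hd⟩),
              V (Fin.cast hσ1 x) z *
                G ⟨1, hd⟩ i z
                  (Fin.cast (hσ (finSucc ⟨1, hd⟩) (finSucc_ne_one hd _ (by simp [Fin.ext_iff]))) y)) →
          -- the remaining cores are unchanged:
          (∀ (k : Fin d) (hk0 : k ≠ ⟨0, by omega⟩) (hk1 : k ≠ ⟨1, by omega⟩),
            ∀ i x y, H k i x y =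
              G k i (Fin.cast (hσ k hk1) x)
                (Fin.cast (hσ (finSucc k) (finSucc_ne_one hd k hk0)) y)) →
          ∀ i, T i = trVal n σ H i) ∧
    ((∀ ρ' : Fin d → ℕ, IsTRRank n ρ' T → (∀ k, ρ' k ≤ ρ k) → ρ' = ρ) →
      A'.rank = ρ ⟨1, by omega⟩) := by
  constructor
  · intro s _ _ U V hUV σ hσ1 hσc H h0 h1 hr
    exact tr_part1 hd n ρ G T hT A' hA' s U V hUV σ hσ1 hσc H h0 h1 hr
  · intro hmin
    by_contra hne
    classical
    have hle : A'.rank ≤ ρ ⟨1, by omega⟩ := by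
      simpa using Matrix.rank_le_card_width A'
    have hlt : A'.rank < ρ ⟨1, by omega⟩ := lt_of_le_of_ne hle hne
    obtain ⟨U, V, hUV⟩ := exists_rank_factorization A'
    set σ : Fin d → ℕ := Function.update ρ ⟨1, by omega⟩ A'.rank with hσdef
    have hσ1 : σ ⟨1, by omega⟩ = A'.rank := Function.update_self _ _ _
    have hσc : ∀ k : Fin d, k ≠ ⟨1, by omega⟩ → σ k = ρ k := fun k hk =>
      Function.update_of_ne hk _ _
    have hTR : IsTRRank n σ T :=
      ⟨buildH hd n ρ G A'.rank U V σ hσ1 hσc,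
        tr_part1 hd n ρ G T hT A' hA' A'.rank U V hUV σ hσ1 hσc _
          (buildH_zero hd n ρ G A'.rank U V σ hσ1 hσc)
          (buildH_one hd n ρ G A'.rank U V σ hσ1 hσc)
          (buildH_rest hd n ρ G A'.rank U V σ hσ1 hσc)⟩
    have hσρ : σ = ρ := hmin σ hTR (fun k => by
      by_cases h : k = ⟨1, by omega⟩
      · rw [h, hσ1]; exact hlt.le
      · rw [hσc k h])
    have h1 : σ ⟨1, by omega⟩ = ρ ⟨1, by omega⟩ := congrFun hσρ _
    rw [hσ1] at h1
    omega
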